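/- Define the Turán defect $T_N(\psi) = \Phi_{N-1}(\psi)^2 - \Phi_{N-2}(\psi)\Phi_N(\psi)$ where $\Phi_m(\psi) = \sum_{k=0}^m e_k(\psi)$ is the partial sum of elementary symmetric polynomials. Fix a squarefree monomial in the variables $\psi$ with $a'$ variables appearing squared and $r$ variables appearing to the first power, and let $L' = N - a'$. Then the coefficient of this monomial in the polynomial $T_N(\psi)$ equals $\max\{\binom{r}{L'-1} - \binom{r}{L'}, 0\}$; in particular it is nonnegative. -/
import Mathlib


open Finset MvPolynomial

/-- `Φ_m = ∑_{k=0}^m e_k` as a multivariate polynomial, with `Φ_m = 0` for `m < 0`. -/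
noncomputable def PhiPoly (σ : Type*) [Fintype σ] [DecidableEq σ] (m : ℤ) :
    MvPolynomial σ ℤ :=
  if m < 0 then 0 else ∑ k ∈ Finset.range (m.toNat + 1), MvPolynomial.esymm σ ℤ k

/-- The Turán defect `T_N = Φ_{N-1}² - Φ_{N-2} Φ_N`. -/
noncomputable def TuranDefect (σ : Type*) [Fintype σ] [DecidableEq σ] (N : ℕ) :
    MvPolynomial σ ℤ :=
  PhiPoly σ ((N : ℤ) - 1) ^ 2 - PhiPoly σ ((N : ℤ) - 2) * PhiPoly σ (N : ℤ)

/-- Binomial coefficient with integer lower index, `0` outside `{0,…,n}`. -/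
def binomZ (n : ℕ) (k : ℤ) : ℤ := if 0 ≤ k then (n.choose k.toNat : ℤ) else 0

set_option linter.unusedSectionVars false


lemma binomZ_nonneg (n : ℕ) (k : ℤ) : 0 ≤ binomZ n k := by
  unfold binomZ; split <;> positivity

lemma binomZ_symm (n : ℕ) (z : ℤ) : binomZ n ((n:ℤ) - z) = binomZ n z := by
  unfold binomZ
  split_ifs with h1 h2 h2
  · have hz : z ≤ (n:ℤ) := by omega
    have e : ((n:ℤ) - z).toNat = n - z.toNat := by omega
    rw [e, Nat.choose_symm (by omega)]
  · rw [Nat.choose_eq_zero_of_lt (by omega)]; simp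
  · rw [Nat.choose_eq_zero_of_lt (by omega)]; simp
  · rfl

lemma binomZ_mono (n : ℕ) (z : ℤ) (h : 2*z ≤ (n:ℤ) + 1) : binomZ n (z-1) ≤ binomZ n z := by
  rcases le_or_gt z 0 with h0 | h0
  · have e : binomZ n (z-1) = 0 := by unfold binomZ; rw [if_neg (by omega)]
    rw [e]; exact binomZ_nonneg n z
  · unfold binomZ
    rw [if_pos (by omega), if_pos (by omega)]
    have hl : (z-1).toNat = z.toNat - 1 := by omega
    rw [hl]
    have hl1 : 1 ≤ z.toNat := by omega
    have h2l : 2*z.toNat ≤ n+1 := by omega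
    rcases Nat.lt_or_ge (2*z.toNat) (n+1) with hlt | hge
    · have hhalf : z.toNat - 1 < n/2 := by omega
      have := Nat.choose_le_succ_of_lt_half_left hhalf
      have e2 : z.toNat - 1 + 1 = z.toNat := by omega
      rw [e2] at this
      exact_mod_cast this
    · have heq : 2*z.toNat = n+1 := by omega
      have e3 : n - (z.toNat - 1) = z.toNat := by omega
      have := Nat.choose_symm (n := n) (k := z.toNat - 1) (by omega)
      rw [e3] at this
      exact le_of_eq (by exact_mod_cast this.symm)

lemma binomZ_anti (n : ℕ) (z : ℤ) (h : (n:ℤ) + 2 ≤ 2*z) : binomZ n z ≤ binomZ n (z-1) := by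
  have h1 := binomZ_mono n ((n:ℤ) - z + 1) (by omega)
  have e1 : (n:ℤ) - z + 1 - 1 = (n:ℤ) - z := by ring
  rw [e1] at h1
  have e2 : binomZ n ((n:ℤ) - z) = binomZ n z := binomZ_symm n z
  have e3 : binomZ n ((n:ℤ) - z + 1) = binomZ n (z-1) := by
    have := binomZ_symm n (z-1)
    rw [← this]; congr 1; ring
  rw [e2, e3] at h1; exact h1

lemma sum_indicator_binomZ (n : ℕ) (z : ℤ) :
    (∑ u ∈ Finset.range (n+1), if (u:ℤ) = z then (n.choose u : ℤ) else 0) = binomZ n z := by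
  rcases lt_or_ge z 0 with h | h
  · rw [binomZ, if_neg (by omega)]
    apply Finset.sum_eq_zero
    intro u hu; rw [if_neg (by omega)]
  · rcases le_or_gt z (n:ℤ) with h2 | h2
    · have hc : ∀ u ∈ Finset.range (n+1),
          (if (u:ℤ) = z then (n.choose u:ℤ) else 0) = if u = z.toNat then (n.choose u:ℤ) else 0 := by
        intro u _
        have hiff : ((u:ℤ) = z) ↔ (u = z.toNat) := by omega
        simp only [hiff]
      rw [Finset.sum_congr rfl hc, Finset.sum_ite_eq' (Finset.range (n+1)) z.toNat,
        if_pos (by rw [Finset.mem_range]; omega), binomZ, if_pos h]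
    · have e : binomZ n z = 0 := by
        rw [binomZ, if_pos h, Nat.choose_eq_zero_of_lt (by omega)]; rfl
      rw [e]
      apply Finset.sum_eq_zero
      intro u hu; rw [Finset.mem_range] at hu; rw [if_neg (by omega)]

section core
variable {σ : Type*} [Fintype σ] [DecidableEq σ]

lemma indF_apply (s : Finset σ) (i : σ) :
    (∑ j ∈ s, Finsupp.single j 1 : σ →₀ ℕ) i = if i ∈ s then 1 else 0 := by
  classical
  rw [Finset.sum_apply']
  simp [Finsupp.single_apply, Finset.sum_ite_eq]

lemma struct_of (d : σ →₀ ℕ) (hd : ∀ i, d i ≤ 2) (s t : Finset σ)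
    (h : ∀ i, (if i ∈ s then 1 else 0) + (if i ∈ t then 1 else 0) = d i) :
    s = (univ.filter fun i => d i = 2) ∪ (s ∩ univ.filter fun i => d i = 1) ∧
    t = (univ.filter fun i => d i = 2) ∪
      ((univ.filter fun i => d i = 1) \ (s ∩ univ.filter fun i => d i = 1)) := by
  constructor <;> ext i <;> have h1 := h i <;> have h2 := hd i <;>
    simp only [mem_union, mem_inter, mem_sdiff, mem_filter, mem_univ, true_and] <;>
    by_cases hs : i ∈ s <;> by_cases ht : i ∈ t <;> simp [hs, ht] at h1 ⊢ <;> omega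

lemma coeff_esymm_mul (d : σ →₀ ℕ) (hd : ∀ i, d i ≤ 2) (j k : ℕ) (a r : ℕ)
    (ha : a = (univ.filter fun i => d i = 2).card)
    (hr : r = (univ.filter fun i => d i = 1).card) :
    MvPolynomial.coeff d (esymm σ ℤ j * esymm σ ℤ k) =
      if a ≤ j ∧ j ≤ a + r ∧ j + k = 2*a + r then (r.choose (j - a) : ℤ) else 0 := by
  classical
  set A := univ.filter fun i : σ => d i = 2 with hA
  set R := univ.filter fun i : σ => d i = 1 with hR
  have hAR : Disjoint A R := by
    simp only [Finset.disjoint_left, hA, hR, mem_filter, mem_univ, true_and]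
    intro x h1 h2; omega
  rw [esymm_eq_sum_monomial, esymm_eq_sum_monomial, Finset.sum_mul_sum]
  simp only [monomial_mul, mul_one]
  rw [← Finset.sum_product']
  rw [MvPolynomial.coeff_sum]
  simp only [MvPolynomial.coeff_monomial]
  rw [Finset.sum_boole]
  -- pointwise characterization
  have hmem : ∀ s t : Finset σ,
      ((∑ i ∈ s, Finsupp.single i 1) + (∑ i ∈ t, Finsupp.single i 1) = d) ↔
      ∀ i, (if i ∈ s then 1 else 0) + (if i ∈ t then 1 else 0) = d i := by
    intro s t
    constructor
    · intro h i
      have := DFunLike.congr_fun h i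
      simpa [Finsupp.add_apply, indF_apply] using this
    · intro h
      ext i
      simp [Finsupp.add_apply, indF_apply, h i]
  have cardfact : ∀ s t : Finset σ,
      (∀ i, (if i ∈ s then 1 else 0) + (if i ∈ t then 1 else 0) = d i) →
      s.card = a + (s ∩ R).card ∧ t.card = a + (r - (s ∩ R).card) ∧ (s ∩ R).card ≤ r := by
    intro s t h
    obtain ⟨hs, ht⟩ := struct_of d hd s t h
    have d1 : Disjoint A (s ∩ R) := hAR.mono_right inter_subset_right
    have d2 : Disjoint A (R \ (s ∩ R)) := hAR.mono_right (sdiff_subset)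
    have hcle : (s ∩ R).card ≤ r := hr ▸ Finset.card_le_card inter_subset_right
    refine ⟨?_, ?_, hcle⟩
    · conv_lhs => rw [hs]
      rw [Finset.card_union_of_disjoint d1, ha]
    · conv_lhs => rw [ht]
      rw [Finset.card_union_of_disjoint d2, Finset.card_sdiff_of_subset inter_subset_right, ha, hr]
  by_cases hcond : a ≤ j ∧ j ≤ a + r ∧ j + k = 2*a + r
  · rw [if_pos hcond]
    have hbij : ((powersetCard j univ ×ˢ powersetCard k univ).filter
          (fun p => (∑ i ∈ p.1, Finsupp.single i 1) + (∑ i ∈ p.2, Finsupp.single i 1) = d)).card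
        = (powersetCard (j - a) R).card := by
      apply Finset.card_bij' (fun p _ => p.1 ∩ R) (fun U _ => (A ∪ U, A ∪ (R \ U)))
      · -- maps to
        rintro ⟨s, t⟩ hp
        rw [Finset.mem_filter, Finset.mem_product, Finset.mem_powersetCard,
          Finset.mem_powersetCard] at hp
        obtain ⟨⟨⟨_, hsc⟩, ⟨_, htc⟩⟩, hcnd⟩ := hp
        dsimp only at hsc htc
        have h := (hmem s t).1 hcnd
        obtain ⟨e1, e2, e3⟩ := cardfact s t h
        rw [Finset.mem_powersetCard]
        dsimp only
        exact ⟨inter_subset_right, by omega⟩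
      · -- inverse maps to
        intro U hU
        rw [Finset.mem_powersetCard] at hU
        obtain ⟨hUR, hUc⟩ := hU
        have dAU : Disjoint A U := hAR.mono_right hUR
        have dAU2 : Disjoint A (R \ U) := hAR.mono_right sdiff_subset
        rw [Finset.mem_filter, Finset.mem_product, Finset.mem_powersetCard,
          Finset.mem_powersetCard]
        refine ⟨⟨⟨Finset.subset_univ _, ?_⟩, ⟨Finset.subset_univ _, ?_⟩⟩, ?_⟩
        · rw [Finset.card_union_of_disjoint dAU, hUc, ← ha]; omega
        · rw [Finset.card_union_of_disjoint dAU2, Finset.card_sdiff_of_subset hUR, hUc, ← ha, ← hr]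
          omega
        · rw [hmem]
          intro i
          by_cases hA' : i ∈ A
          · have hdi : d i = 2 := by simpa [hA] using hA'
            rw [if_pos (mem_union_left _ hA'), if_pos (mem_union_left _ hA'), hdi]
          · by_cases hR' : i ∈ R
            · have hdi : d i = 1 := by simpa [hR] using hR'
              by_cases hU' : i ∈ U
              · have h2 : i ∉ A ∪ (R \ U) := by
                  simp only [mem_union, mem_sdiff, not_or, not_and, not_not]
                  exact ⟨hA', fun _ => hU'⟩
                rw [if_pos (mem_union_right _ hU'), if_neg h2, hdi]
              · have h1 : i ∉ A ∪ U := by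
                  simp only [mem_union, not_or]; exact ⟨hA', hU'⟩
                rw [if_neg h1, if_pos (mem_union_right _ (mem_sdiff.2 ⟨hR', hU'⟩)), hdi]
            · have hdi : d i = 0 := by
                have h2d := hd i
                have h2 : d i ≠ 2 := fun h => hA' (by simp [hA, h])
                have h1 : d i ≠ 1 := fun h => hR' (by simp [hR, h])
                omega
              have hU' : i ∉ U := fun h => hR' (hUR h)
              have h1 : i ∉ A ∪ U := by
                simp only [mem_union, not_or]; exact ⟨hA', hU'⟩
              have h2 : i ∉ A ∪ (R \ U) := by
                simp only [mem_union, mem_sdiff, not_or, not_and]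
                exact ⟨hA', fun h => absurd h hR'⟩
              rw [if_neg h1, if_neg h2, hdi]
      · -- left inverse
        rintro ⟨s, t⟩ hp
        rw [Finset.mem_filter, Finset.mem_product] at hp
        have h := (hmem s t).1 hp.2
        obtain ⟨hs, ht⟩ := struct_of d hd s t h
        dsimp only
        rw [Prod.mk.injEq]
        exact ⟨hs.symm, ht.symm⟩
      · -- right inverse
        intro U hU
        rw [Finset.mem_powersetCard] at hU
        dsimp only
        ext i
        simp only [mem_inter, mem_union]
        constructor
        · rintro ⟨hi1 | hi2, hiR⟩
          · exact absurd hiR (Finset.disjoint_left.1 hAR hi1)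
          · exact hi2
        · intro hi
          exact ⟨Or.inr hi, hU.1 hi⟩
    rw [hbij, Finset.card_powersetCard, ← hr]
  · rw [if_neg hcond]
    have hempty : ((powersetCard j univ ×ˢ powersetCard k univ).filter
          (fun p => (∑ i ∈ p.1, Finsupp.single i 1) + (∑ i ∈ p.2, Finsupp.single i 1) = d)) = ∅ := by
      rw [Finset.filter_eq_empty_iff]
      rintro ⟨s, t⟩ hp hcnd
      rw [Finset.mem_product, Finset.mem_powersetCard, Finset.mem_powersetCard] at hp
      obtain ⟨⟨_, hsc⟩, ⟨_, htc⟩⟩ := hp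
      dsimp only at hsc htc
      have h := (hmem s t).1 hcnd
      obtain ⟨e1, e2, e3⟩ := cardfact s t h
      exact hcond (by omega)
    rw [hempty]
    simp


lemma phi_eq (m : ℤ) : PhiPoly σ m = ∑ k ∈ Finset.range (m+1).toNat, esymm σ ℤ k := by
  unfold PhiPoly
  split
  · next h =>
    have e : (m+1).toNat = 0 := by omega
    rw [e]; simp
  · next h =>
    have e : (m+1).toNat = m.toNat + 1 := by omega
    rw [e]

lemma coeff_phi_mul (d : σ →₀ ℕ) (hd : ∀ i, d i ≤ 2) (a r : ℕ)
    (ha : a = (univ.filter fun i => d i = 2).card)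
    (hr : r = (univ.filter fun i => d i = 1).card) (m m' : ℤ) :
    MvPolynomial.coeff d (PhiPoly σ m * PhiPoly σ m') =
      ∑ u ∈ Finset.range (r + 1),
        if a + u < (m+1).toNat ∧ 2*a + r - (a+u) < (m'+1).toNat
        then (r.choose u : ℤ) else 0 := by
  rw [phi_eq, phi_eq, Finset.sum_mul_sum]
  rw [MvPolynomial.coeff_sum]
  simp only [MvPolynomial.coeff_sum]
  simp only [coeff_esymm_mul d hd _ _ a r ha hr]
  set M := (m+1).toNat with hM
  set M' := (m'+1).toNat with hM'
  have inner : ∀ jj : ℕ,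
      (∑ kk ∈ Finset.range M', if a ≤ jj ∧ jj ≤ a + r ∧ jj + kk = 2*a + r
          then (r.choose (jj - a) : ℤ) else 0)
      = if a ≤ jj ∧ jj ≤ a + r ∧ 2*a + r - jj < M' then (r.choose (jj - a) : ℤ) else 0 := by
    intro jj
    have hterm : ∀ kk : ℕ, (if a ≤ jj ∧ jj ≤ a + r ∧ jj + kk = 2*a + r
            then (r.choose (jj - a) : ℤ) else 0)
        = if kk = 2*a + r - jj then (if a ≤ jj ∧ jj ≤ a + r then (r.choose (jj - a):ℤ) else 0)
          else 0 := by
      intro kk; split_ifs <;> first | rfl | omega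
    simp_rw [hterm]
    rw [Finset.sum_ite_eq' (Finset.range M')]
    simp only [Finset.mem_range]
    split_ifs <;> first | rfl | omega
  simp_rw [inner]
  -- incorporate j < M into the condition
  have step1 : ∀ jj ∈ Finset.range M,
      (if a ≤ jj ∧ jj ≤ a + r ∧ 2*a + r - jj < M' then (r.choose (jj - a) : ℤ) else 0)
      = if a ≤ jj ∧ jj ≤ a + r ∧ jj < M ∧ 2*a + r - jj < M' then (r.choose (jj - a) : ℤ)
        else 0 := by
    intro jj hj; rw [Finset.mem_range] at hj
    split_ifs <;> first | rfl | omega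
  rw [Finset.sum_congr rfl step1]
  have hsub1 : Finset.range M ⊆ Finset.range (M + (a + r + 1)) :=
    Finset.range_subset_range.2 (by omega)
  rw [Finset.sum_subset hsub1 (by
    intro x hx hnx
    rw [Finset.mem_range] at hnx
    rw [if_neg (by omega)])]
  have hsub2 : Finset.Icc a (a+r) ⊆ Finset.range (M + (a + r + 1)) := by
    intro x hx; rw [Finset.mem_Icc] at hx; rw [Finset.mem_range]; omega
  rw [← Finset.sum_subset hsub2 (by
    intro x hx hnx
    rw [Finset.mem_Icc] at hnx
    rw [if_neg (by omega)])]
  rw [← Finset.Ico_add_one_right_eq_Icc, Finset.sum_Ico_eq_sum_range]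
  have e : a + r + 1 - a = r + 1 := by omega
  rw [e]
  apply Finset.sum_congr rfl
  intro u hu
  rw [Finset.mem_range] at hu
  have e2 : a + u - a = u := by omega
  rw [e2]
  split_ifs <;> first | rfl | omega

end core

/-- The coefficient of a monomial with `a'` squared variables and `r` first-power
variables in the Turán defect `T_N` equals `max (C(r, L'-1) - C(r, L'), 0)` where
`L' = N - a'`; in particular it is nonnegative. -/
theorem turanDefect_coeff {σ : Type*} [Fintype σ] [DecidableEq σ] (N : ℕ)
    (d : σ →₀ ℕ) (hd : ∀ i, d i ≤ 2) :
    MvPolynomial.coeff d (TuranDefect σ N) =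
      max (binomZ ((Finset.univ.filter fun i => d i = 1).card)
            ((N : ℤ) - ((Finset.univ.filter fun i => d i = 2).card : ℤ) - 1)
          - binomZ ((Finset.univ.filter fun i => d i = 1).card)
            ((N : ℤ) - ((Finset.univ.filter fun i => d i = 2).card : ℤ))) 0 := by
  classical
  set a := (Finset.univ.filter fun i : σ => d i = 2).card with ha
  set r := (Finset.univ.filter fun i : σ => d i = 1).card with hr
  have e1 : ((N:ℤ) - 1 + 1).toNat = N := by omega
  have e2 : ((N:ℤ) - 2 + 1).toNat = N - 1 := by omega
  have e3 : ((N:ℤ) + 1).toNat = N + 1 := by omega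
  have hT : MvPolynomial.coeff d (TuranDefect σ N) =
      ∑ u ∈ Finset.range (r + 1),
        ((if a + u < N ∧ 2*a + r - (a+u) < N then (r.choose u : ℤ) else 0)
         - (if a + u < N - 1 ∧ 2*a + r - (a+u) < N + 1 then (r.choose u : ℤ) else 0)) := by
    rw [TuranDefect, MvPolynomial.coeff_sub, sq,
      coeff_phi_mul d hd a r ha hr, coeff_phi_mul d hd a r ha hr, e1, e2, e3,
      ← Finset.sum_sub_distrib]
  rw [hT]
  by_cases hc : 2*a + r + 2 ≤ 2*N
  · have hsum : (∑ u ∈ Finset.range (r + 1),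
        ((if a + u < N ∧ 2*a + r - (a+u) < N then (r.choose u : ℤ) else 0)
         - (if a + u < N - 1 ∧ 2*a + r - (a+u) < N + 1 then (r.choose u : ℤ) else 0)))
        = binomZ r ((N:ℤ) - a - 1) - binomZ r ((r:ℤ) + a - N) := by
      rw [← sum_indicator_binomZ r ((N:ℤ) - a - 1), ← sum_indicator_binomZ r ((r:ℤ) + a - N),
        ← Finset.sum_sub_distrib]
      apply Finset.sum_congr rfl
      intro u hu
      rw [Finset.mem_range] at hu
      split_ifs <;> omega
    rw [hsum]
    have hsymm : binomZ r ((r:ℤ) + a - N) = binomZ r ((N:ℤ) - a) := by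
      rw [← binomZ_symm r ((N:ℤ) - a)]
      congr 1; ring
    rw [hsymm]
    have hle : binomZ r ((N:ℤ) - a) ≤ binomZ r ((N:ℤ) - a - 1) := by
      have := binomZ_anti r ((N:ℤ) - a) (by omega)
      simpa using this
    rw [max_eq_left (by omega)]
  · have hz : ∀ u ∈ Finset.range (r + 1),
        ((if a + u < N ∧ 2*a + r - (a+u) < N then (r.choose u : ℤ) else 0)
         - (if a + u < N - 1 ∧ 2*a + r - (a+u) < N + 1 then (r.choose u : ℤ) else 0)) = 0 := by
      intro u hu
      rw [Finset.mem_range] at hu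
      split_ifs <;> omega
    rw [Finset.sum_eq_zero hz]
    have hle : binomZ r ((N:ℤ) - a - 1) ≤ binomZ r ((N:ℤ) - a) := by
      have := binomZ_mono r ((N:ℤ) - a) (by omega)
      simpa using this
    rw [max_eq_right (by omega)]
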